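/- Let Q be symmetric positive semidefinite partitioned into s×s blocks Q^{i,j}, and define the block-diagonal matrix J with blocks J^{i,i} = Q^{i,i} + (Σ_{j≠i}‖Q^{i,j}‖₂)·I. Then S := J − Q is symmetric positive semidefinite. -/

import Mathlib

open Matrix
open scoped Matrix.Norms.L2Operator

/-- The spectral norm (`‖·‖₂`, largest singular value) of a real rectangular matrix,
as the operator norm of the induced map between Euclidean spaces. -/
noncomputable def specNorm {p q : Type*} [Fintype p] [Fintype q] [DecidableEq q]
    (A : Matrix p q ℝ) : ℝ :=
  ‖LinearMap.toContinuousLinearMap (Matrix.toEuclideanLin A)‖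

lemma specNorm_eq {p q : Type*} [Fintype p] [Fintype q] [DecidableEq q] (A : Matrix p q ℝ) :
    specNorm A = ‖A‖ := rfl

lemma specNorm_nonneg {p q : Type*} [Fintype p] [Fintype q] [DecidableEq q] (A : Matrix p q ℝ) :
    0 ≤ specNorm A := norm_nonneg _

lemma specNorm_transpose {p q : Type*} [Fintype p] [Fintype q] [DecidableEq p] [DecidableEq q]
    (A : Matrix p q ℝ) : specNorm Aᵀ = specNorm A := by
  have h : Aᴴ = Aᵀ := by ext i j; simp [conjTranspose_apply]
  rw [specNorm_eq, specNorm_eq, ← h, Matrix.l2_opNorm_conjTranspose]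

lemma dot_mulVec_le {p q : Type*} [Fintype p] [Fintype q] [DecidableEq q]
    (A : Matrix p q ℝ) (x : p → ℝ) (y : q → ℝ) :
    x ⬝ᵥ A *ᵥ y ≤ specNorm A *
      (‖(WithLp.equiv 2 (p → ℝ)).symm x‖ * ‖(WithLp.equiv 2 (q → ℝ)).symm y‖) := by
  have h1 : x ⬝ᵥ A *ᵥ y =
      inner ℝ ((WithLp.equiv 2 (p → ℝ)).symm x) ((WithLp.equiv 2 (p → ℝ)).symm (A *ᵥ y)) := by
    simp [PiLp.inner_apply, dotProduct, RCLike.inner_apply, PiLp.toLp_apply, mul_comm]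
  rw [h1]
  calc _ ≤ ‖(WithLp.equiv 2 (p → ℝ)).symm x‖ * ‖(WithLp.equiv 2 (p → ℝ)).symm (A *ᵥ y)‖ :=
        real_inner_le_norm _ _
    _ ≤ ‖(WithLp.equiv 2 (p → ℝ)).symm x‖ * (‖A‖ * ‖(WithLp.equiv 2 (q → ℝ)).symm y‖) := by
        apply mul_le_mul_of_nonneg_left _ (norm_nonneg _)
        exact Matrix.l2_opNorm_mulVec A ((WithLp.equiv 2 (q → ℝ)).symm y)
    _ = _ := by rw [specNorm_eq]; ring

noncomputable def blk {s : ℕ} (m : Fin s → ℕ)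
    (Q : Matrix ((i : Fin s) × Fin (m i)) ((i : Fin s) × Fin (m i)) ℝ) (i j : Fin s) :
    Matrix (Fin (m i)) (Fin (m j)) ℝ :=
  Q.submatrix (fun a => ⟨i, a⟩) (fun b => ⟨j, b⟩)

noncomputable def cB {s : ℕ} (m : Fin s → ℕ)
    (Q : Matrix ((i : Fin s) × Fin (m i)) ((i : Fin s) × Fin (m i)) ℝ) (i : Fin s) : ℝ :=
  ∑ j ∈ Finset.univ.erase i, specNorm (blk m Q i j)

-- the sum in hJ is definitionally `cB`
lemma cB_eq {s : ℕ} (m : Fin s → ℕ)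
    (Q : Matrix ((i : Fin s) × Fin (m i)) ((i : Fin s) × Fin (m i)) ℝ) (i : Fin s) :
    (∑ j ∈ Finset.univ.erase i,
        specNorm (Q.submatrix (Sigma.mk i) (Sigma.mk j))) = cB m Q i := rfl

lemma sum_ite_ne {α β : Type*} [Fintype α] [DecidableEq α] [AddCommGroup β]
    (i : α) (f : α → β) :
    (∑ j : α, if i = j then 0 else f j) = ∑ j ∈ Finset.univ.erase i, f j := by
  have h1 : ∀ j : α, (if i = j then (0:β) else f j) = f j - (if i = j then f j else 0) := by
    intro j; split_ifs <;> simp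
  simp only [h1, Finset.sum_sub_distrib, Finset.sum_ite_eq, Finset.mem_univ, if_true]
  rw [Finset.sum_erase_eq_sub (Finset.mem_univ i)]


theorem block_diag_proximal_psd {s : ℕ} (m : Fin s → ℕ)
    (Q : Matrix ((i : Fin s) × Fin (m i)) ((i : Fin s) × Fin (m i)) ℝ)
    (hQ : Q.PosSemidef)
    (J : Matrix ((i : Fin s) × Fin (m i)) ((i : Fin s) × Fin (m i)) ℝ)
    (hJ : ∀ p q, J p q =
      (if p.1 = q.1 then Q p q else 0) +
      (if p = q then
        ∑ j ∈ Finset.univ.erase p.1,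
          specNorm (Q.submatrix (Sigma.mk p.1) (Sigma.mk j))
       else 0)) :
    (J - Q).PosSemidef := by
  classical
  simp only [cB_eq] at hJ
  have hsym : ∀ p q, Q q p = Q p q := by
    intro p q
    conv_lhs => rw [← hQ.1]
    simp [conjTranspose_apply]
  have entry : ∀ p q, (J - Q) p q =
      (if p = q then cB m Q p.1 else 0) + (if p.1 = q.1 then 0 else -(Q p q)) := by
    intro p q
    rw [Matrix.sub_apply, hJ]
    by_cases h' : p = q
    · subst h'; simp
    · by_cases h : p.1 = q.1 <;> simp [h, h']
  refine posSemidef_iff_dotProduct_mulVec.mpr ⟨?_, ?_⟩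
  · -- Hermitian
    ext p q
    simp only [conjTranspose_apply, star_trivial]
    rw [entry, entry]
    by_cases h' : p = q
    · subst h'; simp
    · have h'' : ¬ q = p := fun hh => h' hh.symm
      by_cases h : p.1 = q.1
      · rw [if_neg h', if_neg h'', if_pos h, if_pos h.symm]
      · rw [if_neg h', if_neg h'', if_neg h, if_neg (fun hh => h hh.symm), hsym]
  · intro x
    set nr : Fin s → ℝ :=
      fun i => ‖(WithLp.equiv 2 (Fin (m i) → ℝ)).symm (fun a => x ⟨i, a⟩)‖ with hnr
    have nrsq : ∀ i, nr i ^ 2 = ∑ a, x ⟨i, a⟩ * x ⟨i, a⟩ := by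
      intro i
      rw [hnr, ← real_inner_self_eq_norm_sq]
      simp only [PiLp.inner_apply, RCLike.inner_apply, WithLp.equiv_symm_apply, PiLp.toLp_apply, conj_trivial]
    -- main identity
    have hsplit : star x ⬝ᵥ ((J - Q) *ᵥ x) =
        (∑ i, cB m Q i * nr i ^ 2) -
        ∑ i, ∑ j ∈ Finset.univ.erase i,
          (fun a => x ⟨i, a⟩) ⬝ᵥ (blk m Q i j) *ᵥ (fun b => x ⟨j, b⟩) := by
      have e1 : star x ⬝ᵥ ((J - Q) *ᵥ x) = ∑ p, ∑ q, x p * ((J - Q) p q * x q) := by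
        simp [dotProduct, mulVec, Finset.mul_sum]
      rw [e1]
      have e2 : ∀ p q : (i : Fin s) × Fin (m i), x p * ((J - Q) p q * x q) =
          (if p = q then cB m Q p.1 * (x p * x p) else 0) +
          (if p.1 = q.1 then 0 else -(x p * (Q p q * x q))) := by
        intro p q
        rw [entry p q]
        by_cases h' : p = q
        · subst h'; simp; ring
        · by_cases h : p.1 = q.1 <;> simp [h, h'] <;> ring
      simp only [e2, Finset.sum_add_distrib]
      have first : (∑ p : (i : Fin s) × Fin (m i), ∑ q : (i : Fin s) × Fin (m i),
          if p = q then cB m Q p.1 * (x p * x p) else 0) = ∑ i, cB m Q i * nr i ^ 2 := by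
        have h0 : ∀ p : (i : Fin s) × Fin (m i),
            (∑ q : (i : Fin s) × Fin (m i), if p = q then cB m Q p.1 * (x p * x p) else 0)
            = cB m Q p.1 * (x p * x p) := by
          intro p; simp
        simp only [h0]
        rw [← Finset.univ_sigma_univ, Finset.sum_sigma]
        exact Finset.sum_congr rfl fun i _ => by rw [nrsq, Finset.mul_sum]
      have second : (∑ p : (i : Fin s) × Fin (m i), ∑ q : (i : Fin s) × Fin (m i),
          if p.1 = q.1 then 0 else -(x p * (Q p q * x q))) =
          -∑ i, ∑ j ∈ Finset.univ.erase i,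
            (fun a => x ⟨i, a⟩) ⬝ᵥ (blk m Q i j) *ᵥ (fun b => x ⟨j, b⟩) := by
        have inner_eq : ∀ p : (i : Fin s) × Fin (m i),
            (∑ q : (j : Fin s) × Fin (m j),
              if p.1 = q.1 then 0 else -(x p * (Q p q * x q)))
            = ∑ j ∈ Finset.univ.erase p.1,
                -(∑ b, x p * (Q p ⟨j, b⟩ * x ⟨j, b⟩)) := by
          intro p
          rw [← Finset.univ_sigma_univ, Finset.sum_sigma]
          have step : ∀ j : Fin s,
              (∑ b : Fin (m j), if p.1 = j then 0 else -(x p * (Q p ⟨j, b⟩ * x ⟨j, b⟩)))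
              = if p.1 = j then 0
                else -(∑ b : Fin (m j), x p * (Q p ⟨j, b⟩ * x ⟨j, b⟩)) := by
            intro j; split_ifs <;> simp
          simp only [step]
          exact sum_ite_ne p.1 _
        simp only [inner_eq]
        rw [← Finset.univ_sigma_univ, Finset.sum_sigma]
        rw [← Finset.sum_neg_distrib]
        refine Finset.sum_congr rfl fun i _ => ?_
        have rhs : ∀ j, (fun a => x ⟨i, a⟩) ⬝ᵥ (blk m Q i j) *ᵥ (fun b => x ⟨j, b⟩)
            = ∑ a, ∑ b, x ⟨i, a⟩ * (Q ⟨i, a⟩ ⟨j, b⟩ * x ⟨j, b⟩) := by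
          intro j; simp [dotProduct, mulVec, blk, Finset.mul_sum]
        calc (∑ a : Fin (m i), ∑ j ∈ Finset.univ.erase i,
                -(∑ b, x ⟨i, a⟩ * (Q ⟨i, a⟩ ⟨j, b⟩ * x ⟨j, b⟩)))
            = ∑ j ∈ Finset.univ.erase i, ∑ a : Fin (m i),
                -(∑ b, x ⟨i, a⟩ * (Q ⟨i, a⟩ ⟨j, b⟩ * x ⟨j, b⟩)) := Finset.sum_comm
          _ = ∑ j ∈ Finset.univ.erase i,
                -(∑ a, ∑ b, x ⟨i, a⟩ * (Q ⟨i, a⟩ ⟨j, b⟩ * x ⟨j, b⟩)) :=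
              Finset.sum_congr rfl fun j _ => Finset.sum_neg_distrib _
          _ = -(∑ j ∈ Finset.univ.erase i,
                (fun a => x ⟨i, a⟩) ⬝ᵥ (blk m Q i j) *ᵥ (fun b => x ⟨j, b⟩)) := by
              simp only [rhs]
              exact Finset.sum_neg_distrib _
      rw [first, second]; ring
    rw [hsplit]
    -- now the bound
    have key : ∀ i, ∑ j ∈ Finset.univ.erase i,
          (fun a => x ⟨i, a⟩) ⬝ᵥ (blk m Q i j) *ᵥ (fun b => x ⟨j, b⟩)
        ≤ ∑ j ∈ Finset.univ.erase i, specNorm (blk m Q i j) * (nr i * nr j) := by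
      intro i
      refine Finset.sum_le_sum fun j _ => ?_
      exact dot_mulVec_le _ _ _
    have hs : ∀ i j, specNorm (blk m Q j i) = specNorm (blk m Q i j) := by
      intro i j
      have hT : blk m Q j i = (blk m Q i j)ᵀ := by
        ext a b; exact hsym _ _
      rw [hT, specNorm_transpose]
    have step2 : ∀ i, ∑ j ∈ Finset.univ.erase i, specNorm (blk m Q i j) * (nr i * nr j)
        ≤ ∑ j ∈ Finset.univ.erase i,
            specNorm (blk m Q i j) * ((nr i ^ 2 + nr j ^ 2) / 2) := by
      intro i
      refine Finset.sum_le_sum fun j _ => mul_le_mul_of_nonneg_left ?_ (specNorm_nonneg _)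
      nlinarith [sq_nonneg (nr i - nr j)]
    have swap : (∑ i, ∑ j ∈ Finset.univ.erase i, specNorm (blk m Q i j) * nr j ^ 2)
        = ∑ i, cB m Q i * nr i ^ 2 := by
      have hiff : ∀ i j : Fin s,
          i ∈ (Finset.univ : Finset (Fin s)) ∧ j ∈ Finset.univ.erase i ↔
          i ∈ Finset.univ.erase j ∧ j ∈ (Finset.univ : Finset (Fin s)) := by
        intro i j
        simp only [Finset.mem_univ, Finset.mem_erase, true_and, and_true]
        exact ne_comm
      rw [Finset.sum_comm' hiff]
      refine Finset.sum_congr rfl fun j _ => ?_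
      rw [cB, Finset.sum_mul]
      exact Finset.sum_congr rfl fun i _ => by rw [hs]
    have combine : (∑ i, ∑ j ∈ Finset.univ.erase i,
          specNorm (blk m Q i j) * ((nr i ^ 2 + nr j ^ 2) / 2))
        = ∑ i, cB m Q i * nr i ^ 2 := by
      have e : ∀ (i j : Fin s), specNorm (blk m Q i j) * ((nr i ^ 2 + nr j ^ 2) / 2)
          = specNorm (blk m Q i j) * nr i ^ 2 / 2
            + specNorm (blk m Q i j) * nr j ^ 2 / 2 := by intro i j; ring
      simp only [e, Finset.sum_add_distrib]
      have A : (∑ i, ∑ j ∈ Finset.univ.erase i, specNorm (blk m Q i j) * nr i ^ 2 / 2)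
          = (∑ i, cB m Q i * nr i ^ 2) / 2 := by
        rw [Finset.sum_div]
        refine Finset.sum_congr rfl fun i _ => ?_
        rw [← Finset.sum_div, cB, Finset.sum_mul]
      have B : (∑ i, ∑ j ∈ Finset.univ.erase i, specNorm (blk m Q i j) * nr j ^ 2 / 2)
          = (∑ i, cB m Q i * nr i ^ 2) / 2 := by
        have : (∑ i, ∑ j ∈ Finset.univ.erase i, specNorm (blk m Q i j) * nr j ^ 2 / 2)
            = (∑ i, ∑ j ∈ Finset.univ.erase i, specNorm (blk m Q i j) * nr j ^ 2) / 2 := by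
          rw [Finset.sum_div]
          exact Finset.sum_congr rfl fun i _ => by rw [Finset.sum_div]
        rw [this, swap]
      rw [A, B]; ring
    have final : (∑ i, ∑ j ∈ Finset.univ.erase i,
          (fun a => x ⟨i, a⟩) ⬝ᵥ (blk m Q i j) *ᵥ (fun b => x ⟨j, b⟩))
        ≤ ∑ i, cB m Q i * nr i ^ 2 := by
      calc _ ≤ ∑ i, ∑ j ∈ Finset.univ.erase i, specNorm (blk m Q i j) * (nr i * nr j) :=
            Finset.sum_le_sum fun i _ => key i
        _ ≤ ∑ i, ∑ j ∈ Finset.univ.erase i,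
              specNorm (blk m Q i j) * ((nr i ^ 2 + nr j ^ 2) / 2) :=
            Finset.sum_le_sum fun i _ => step2 i
        _ = _ := combine
    linarith [final]
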